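/- Let λ^{(1)}, …, λ^{(q)} be nonnegative rate vectors in ℝ^k. For every integer m ≥ 0 and every t ≥ 0, Σ_{(l_1,…,l_q) ∈ ℕ₀^q, l_1+⋯+l_q = m} ∏_{i=1}^{q} p(λ^{(i)}; l_i, t) = p(Σ_{i=1}^q λ^{(i)}; m, t). That is, the merged process of q independent GCPs is a GCP whose jump rate for jumps of size j equals β_j = Σ_{i=1}^q λ_j^{(i)}. -/

import Mathlib

open Finset

/-- The set `Ω(k, n)` of tuples `x : Fin k → ℕ` with `∑_{j=1}^k j * x_j = n`
(`j : Fin k` represents the jump size `j + 1`). -/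
def gcpOmega (k n : ℕ) : Finset (Fin k → ℕ) :=
  (Fintype.piFinset fun _ : Fin k => Finset.range (n + 1)).filter
    fun x => ∑ j : Fin k, (j.1 + 1) * x j = n

/-- The probability mass function of the generalized counting process with jump
rates `lam j` for jumps of size `j + 1`, evaluated at state `n` and time `t`. -/
noncomputable def gcpPMF (k : ℕ) (lam : Fin k → ℝ) (n : ℕ) (t : ℝ) : ℝ :=
  ∑ x ∈ gcpOmega k n,
    ∏ j : Fin k, (lam j * t) ^ (x j) / (Nat.factorial (x j)) * Real.exp (-(lam j * t))

/-- The power series `exp (a * X^d)`. -/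
noncomputable def expPow (a : ℝ) (d : ℕ) : PowerSeries ℝ :=
  PowerSeries.mk fun n => if d ∣ n then a ^ (n / d) / Nat.factorial (n / d) else 0

lemma coeff_expPow (a : ℝ) (d n : ℕ) :
    PowerSeries.coeff n (expPow a d) =
      if d ∣ n then a ^ (n / d) / Nat.factorial (n / d) else 0 :=
  PowerSeries.coeff_mk _ _

lemma expPow_zero (d : ℕ) (hd : 0 < d) : expPow 0 d = 1 := by
  ext n
  rw [coeff_expPow, PowerSeries.coeff_one]
  rcases eq_or_ne n 0 with rfl | hn
  · simp
  · rw [if_neg hn]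
    split_ifs with h
    · obtain ⟨c, rfl⟩ := h
      have hc : c ≠ 0 := by rintro rfl; exact hn (by simp)
      rw [Nat.mul_div_cancel_left c hd, zero_pow hc, zero_div]
    · rfl

lemma binomial_div (a b : ℝ) (c : ℕ) :
    ∑ e ∈ Finset.HasAntidiagonal.antidiagonal c,
        a ^ e.1 / (Nat.factorial e.1) * (b ^ e.2 / (Nat.factorial e.2))
      = (a + b) ^ c / Nat.factorial c := by
  rw [Finset.Nat.sum_antidiagonal_eq_sum_range_succ_mk, add_pow, Finset.sum_div]
  refine Finset.sum_congr rfl fun i hi => ?_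
  have hic : i ≤ c := Nat.lt_succ_iff.mp (Finset.mem_range.mp hi)
  rw [Nat.cast_choose ℝ hic]
  have h1 : (Nat.factorial i : ℝ) ≠ 0 := Nat.cast_ne_zero.mpr (Nat.factorial_ne_zero i)
  have h2 : (Nat.factorial (c - i) : ℝ) ≠ 0 := Nat.cast_ne_zero.mpr (Nat.factorial_ne_zero _)
  have h3 : (Nat.factorial c : ℝ) ≠ 0 := Nat.cast_ne_zero.mpr (Nat.factorial_ne_zero c)
  field_simp

lemma expPow_mul (a b : ℝ) (d : ℕ) (hd : 0 < d) :
    expPow a d * expPow b d = expPow (a + b) d := by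
  ext n
  rw [PowerSeries.coeff_mul, coeff_expPow]
  by_cases hdn : d ∣ n
  · obtain ⟨c, rfl⟩ := hdn
    rw [if_pos (Dvd.intro c rfl), Nat.mul_div_cancel_left c hd]
    have key : ∀ p ∈ Finset.HasAntidiagonal.antidiagonal (d * c),
        (PowerSeries.coeff p.1 (expPow a d)) * (PowerSeries.coeff p.2 (expPow b d)) ≠ 0 →
          d ∣ p.1 ∧ d ∣ p.2 := by
      intro p _ hne
      constructor
      · by_contra h
        exact hne (by rw [coeff_expPow, if_neg h, zero_mul])
      · by_contra h
        exact hne (by rw [coeff_expPow b d, if_neg h, mul_zero])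
    rw [← Finset.sum_filter_of_ne key]
    rw [← binomial_div a b c]
    refine Finset.sum_bij' (fun p _ => (p.1 / d, p.2 / d)) (fun e _ => (d * e.1, d * e.2))
      ?_ ?_ ?_ ?_ ?_
    · rintro ⟨p1, p2⟩ hp
      simp only [Finset.mem_filter, Finset.HasAntidiagonal.mem_antidiagonal] at hp
      obtain ⟨hsum, h1, h2⟩ := hp
      simp only [Finset.HasAntidiagonal.mem_antidiagonal]
      obtain ⟨u, rfl⟩ := h1
      obtain ⟨v, rfl⟩ := h2
      rw [Nat.mul_div_cancel_left u hd, Nat.mul_div_cancel_left v hd]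
      have : d * (u + v) = d * c := by rw [Nat.mul_add]; exact hsum
      exact Nat.eq_of_mul_eq_mul_left hd this
    · rintro ⟨e1, e2⟩ he
      simp only [Finset.HasAntidiagonal.mem_antidiagonal] at he
      simp only [Finset.mem_filter, Finset.HasAntidiagonal.mem_antidiagonal]
      exact ⟨by rw [← Nat.mul_add, he], ⟨e1, rfl⟩, ⟨e2, rfl⟩⟩
    · rintro ⟨p1, p2⟩ hp
      simp only [Finset.mem_filter, Finset.HasAntidiagonal.mem_antidiagonal] at hp
      obtain ⟨_, h1, h2⟩ := hp
      simp [Nat.mul_div_cancel' h1, Nat.mul_div_cancel' h2]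
    · rintro ⟨e1, e2⟩ _
      simp [Nat.mul_div_cancel_left _ hd]
    · rintro ⟨p1, p2⟩ hp
      simp only [Finset.mem_filter, Finset.HasAntidiagonal.mem_antidiagonal] at hp
      obtain ⟨_, h1, h2⟩ := hp
      rw [coeff_expPow, coeff_expPow, if_pos h1, if_pos h2]
  · rw [if_neg hdn]
    refine Finset.sum_eq_zero fun p hp => ?_
    by_cases h1 : d ∣ p.1
    · have h2 : ¬ d ∣ p.2 := by
        intro h2
        exact hdn (by rw [← Finset.HasAntidiagonal.mem_antidiagonal.mp hp]; exact Nat.dvd_add h1 h2)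
      rw [coeff_expPow b d, if_neg h2, mul_zero]
    · rw [coeff_expPow, if_neg h1, zero_mul]

lemma expPow_sum {ι : Type*} (s : Finset ι) (f : ι → ℝ) (d : ℕ) (hd : 0 < d) :
    ∏ i ∈ s, expPow (f i) d = expPow (∑ i ∈ s, f i) d := by
  induction s using Finset.cons_induction with
  | empty => simpa using (expPow_zero d hd).symm
  | cons a s ha ih =>
      rw [Finset.prod_cons, ih, expPow_mul _ _ _ hd, Finset.sum_cons]

lemma sum_finsuppAntidiag_eq {N : ℕ} (m : ℕ) (g : Fin N → ℕ → ℝ) :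
    ∑ l ∈ Finset.finsuppAntidiag (Finset.univ : Finset (Fin N)) m, ∏ i : Fin N, g i (l i)
      = ∑ l ∈ (Fintype.piFinset fun _ : Fin N => Finset.range (m + 1)).filter
          (fun l => ∑ i : Fin N, l i = m), ∏ i : Fin N, g i (l i) := by
  refine Finset.sum_bij' (fun l _ => (l : Fin N → ℕ))
    (fun l _ => Finsupp.equivFunOnFinite.symm l) ?_ ?_ ?_ ?_ ?_
  · intro l hl
    rw [Finset.mem_finsuppAntidiag] at hl
    obtain ⟨hsum, -⟩ := hl
    simp only [Finset.mem_filter, Fintype.mem_piFinset, Finset.mem_range]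
    refine ⟨fun i => Nat.lt_succ_of_le ?_, hsum⟩
    rw [← hsum]
    exact Finset.single_le_sum (f := fun i => l i) (fun _ _ => Nat.zero_le _)
      (Finset.mem_univ i)
  · intro l hl
    rw [Finset.mem_filter] at hl
    rw [Finset.mem_finsuppAntidiag]
    exact ⟨hl.2, Finset.subset_univ _⟩
  · intro l _
    exact Equiv.symm_apply_apply _ _
  · intro l _
    rfl
  · intro l _
    rfl

/-- The generating power series of the GCP state distribution (without the
exponential normalizing constant). -/
noncomputable def gser (k : ℕ) (lam : Fin k → ℝ) (t : ℝ) : PowerSeries ℝ :=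
  ∏ j : Fin k, expPow (lam j * t) (j.1 + 1)

lemma coeff_gser (k : ℕ) (lam : Fin k → ℝ) (t : ℝ) (n : ℕ) :
    PowerSeries.coeff n (gser k lam t) =
      ∑ x ∈ gcpOmega k n, ∏ j : Fin k, (lam j * t) ^ (x j) / (Nat.factorial (x j)) := by
  rw [gser, PowerSeries.coeff_prod,
    sum_finsuppAntidiag_eq n (fun j v => PowerSeries.coeff v (expPow (lam j * t) (j.1 + 1)))]
  have key : ∀ l ∈ (Fintype.piFinset fun _ : Fin k => Finset.range (n + 1)).filter
      (fun l => ∑ i : Fin k, l i = n),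
      (∏ j : Fin k, PowerSeries.coeff (l j) (expPow (lam j * t) (j.1 + 1))) ≠ 0 →
        (∀ j : Fin k, (j.1 + 1) ∣ l j) := by
    intro l _ hne
    by_contra h
    push_neg at h
    obtain ⟨j, hj⟩ := h
    exact hne (Finset.prod_eq_zero (Finset.mem_univ j)
      (by rw [coeff_expPow, if_neg hj]))
  rw [← Finset.sum_filter_of_ne key]
  refine Finset.sum_bij' (fun l _ => fun j : Fin k => l j / (j.1 + 1))
    (fun x _ => fun j : Fin k => (j.1 + 1) * x j) ?_ ?_ ?_ ?_ ?_
  · intro l hl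
    simp only [Finset.mem_filter, Fintype.mem_piFinset, Finset.mem_range] at hl
    obtain ⟨⟨hlt, hsum⟩, hdvd⟩ := hl
    simp only [gcpOmega, Finset.mem_filter, Fintype.mem_piFinset, Finset.mem_range]
    constructor
    · intro j
      exact lt_of_le_of_lt (Nat.div_le_self _ _) (hlt j)
    · rw [← hsum]
      exact Finset.sum_congr rfl fun j _ => Nat.mul_div_cancel' (hdvd j)
  · intro x hx
    simp only [gcpOmega, Finset.mem_filter, Fintype.mem_piFinset, Finset.mem_range] at hx
    obtain ⟨hlt, hsum⟩ := hx
    simp only [Finset.mem_filter, Fintype.mem_piFinset, Finset.mem_range]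
    refine ⟨⟨fun j => Nat.lt_succ_of_le ?_, hsum⟩, fun j => Dvd.intro _ rfl⟩
    rw [← hsum]
    exact Finset.single_le_sum (f := fun j : Fin k => (j.1 + 1) * x j)
      (fun _ _ => Nat.zero_le _) (Finset.mem_univ j)
  · intro l hl
    simp only [Finset.mem_filter] at hl
    funext j
    exact Nat.mul_div_cancel' (hl.2 j)
  · intro x _
    funext j
    exact Nat.mul_div_cancel_left _ (Nat.succ_pos _)
  · intro l hl
    simp only [Finset.mem_filter] at hl
    refine Finset.prod_congr rfl fun j _ => ?_
    rw [coeff_expPow, if_pos (hl.2 j)]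

lemma gcpPMF_eq (k : ℕ) (lam : Fin k → ℝ) (n : ℕ) (t : ℝ) :
    gcpPMF k lam n t =
      (∏ j : Fin k, Real.exp (-(lam j * t))) * PowerSeries.coeff n (gser k lam t) := by
  rw [coeff_gser, gcpPMF, Finset.mul_sum]
  refine Finset.sum_congr rfl fun x _ => ?_
  rw [Finset.prod_mul_distrib]
  ring

lemma gser_sum (k q : ℕ) (lam : Fin q → Fin k → ℝ) (t : ℝ) :
    ∏ i : Fin q, gser k (lam i) t = gser k (fun j => ∑ i : Fin q, lam i j) t := by
  simp only [gser]
  rw [Finset.prod_comm]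
  refine Finset.prod_congr rfl fun j _ => ?_
  rw [expPow_sum Finset.univ (fun i => lam i j * t) (j.1 + 1) (Nat.succ_pos _),
    ← Finset.sum_mul]

/-- The merged process of `q` independent GCPs with rate vectors `lam i` is a GCP
whose rate for jumps of size `j` is `β_j = ∑ i, lam i j`. -/
theorem merging_of_finitely_many_gcps (k : ℕ) (hk : 1 ≤ k) (q : ℕ) (hq : 1 ≤ q)
    (lam : Fin q → Fin k → ℝ) (hlam : ∀ i j, 0 ≤ lam i j) (t : ℝ) (ht : 0 ≤ t) (m : ℕ) :
    ∑ l ∈ (Fintype.piFinset fun _ : Fin q => Finset.range (m + 1)).filter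
        (fun l => ∑ i : Fin q, l i = m),
      ∏ i : Fin q, gcpPMF k (lam i) (l i) t
      = gcpPMF k (fun j => ∑ i : Fin q, lam i j) m t := by
  calc
    ∑ l ∈ (Fintype.piFinset fun _ : Fin q => Finset.range (m + 1)).filter
        (fun l => ∑ i : Fin q, l i = m),
      ∏ i : Fin q, gcpPMF k (lam i) (l i) t
      = ∑ l ∈ (Fintype.piFinset fun _ : Fin q => Finset.range (m + 1)).filter
          (fun l => ∑ i : Fin q, l i = m),
        (∏ i : Fin q, ∏ j : Fin k, Real.exp (-(lam i j * t))) *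
          ∏ i : Fin q, PowerSeries.coeff (l i) (gser k (lam i) t) := by
        refine Finset.sum_congr rfl fun l _ => ?_
        rw [← Finset.prod_mul_distrib]
        exact Finset.prod_congr rfl fun i _ => gcpPMF_eq k (lam i) (l i) t
    _ = (∏ i : Fin q, ∏ j : Fin k, Real.exp (-(lam i j * t))) *
          ∑ l ∈ (Fintype.piFinset fun _ : Fin q => Finset.range (m + 1)).filter
            (fun l => ∑ i : Fin q, l i = m),
          ∏ i : Fin q, PowerSeries.coeff (l i) (gser k (lam i) t) := by
        rw [Finset.mul_sum]
    _ = (∏ i : Fin q, ∏ j : Fin k, Real.exp (-(lam i j * t))) *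
          PowerSeries.coeff m (∏ i : Fin q, gser k (lam i) t) := by
        rw [PowerSeries.coeff_prod,
          sum_finsuppAntidiag_eq m (fun i v => PowerSeries.coeff v (gser k (lam i) t))]
    _ = gcpPMF k (fun j => ∑ i : Fin q, lam i j) m t := by
        rw [gser_sum, gcpPMF_eq]
        congr 1
        rw [Finset.prod_comm]
        refine Finset.prod_congr rfl fun j _ => ?_
        rw [← Real.exp_sum]
        congr 1
        rw [Finset.sum_mul, ← Finset.sum_neg_distrib]
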